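/- For a monotone submodular set function f with f(∅) = 0, the greedy algorithm that for k steps adds the element with maximum marginal gain produces a set G_k with f(G_k) ≥ (1 − (1 − 1/k)^k)·f(OPT), where OPT is any set of size at most k; in particular f(G_k) ≥ (1 − 1/e)·f(OPT). -/

import Mathlib

/-- Submodularity implies the marginal gain of a set is at most the sum of
individual marginal gains. -/
lemma submodular_sum_gain {E : Type*} [DecidableEq E]
    (f : Finset E → ℝ)
    (hsub : ∀ A B : Finset E, ∀ x, A ⊆ B → x ∉ B →
      f (insert x B) - f B ≤ f (insert x A) - f A) :
    ∀ (S A : Finset E), f (A ∪ S) - f A ≤ ∑ y ∈ S, (f (insert y A) - f A) := by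
  intro S
  induction S using Finset.induction_on with
  | empty => intro A; simp
  | insert y S hy ih =>
    intro A
    rw [Finset.sum_insert hy]
    have h1 : f (A ∪ insert y S) - f (A ∪ S) ≤ f (insert y A) - f A := by
      by_cases hyA : y ∈ A
      · have : A ∪ insert y S = A ∪ S := by
          rw [Finset.union_insert, Finset.insert_eq_self.mpr (Finset.mem_union_left _ hyA)]
        rw [this, Finset.insert_eq_self.mpr hyA]
        simp
      · have hyAS : y ∉ A ∪ S := by simp [hyA, hy]
        have := hsub A (A ∪ S) y Finset.subset_union_left hyAS
        rw [Finset.union_insert]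
        linarith
    have h2 := ih A
    linarith

theorem greedy_submodular_approximation {E : Type*} [DecidableEq E]
    (f : Finset E → ℝ) (hnn : ∀ A, 0 ≤ f A)
    (hmono : ∀ A B : Finset E, A ⊆ B → f A ≤ f B)
    (hsub : ∀ A B : Finset E, ∀ x, A ⊆ B → x ∉ B →
      f (insert x B) - f B ≤ f (insert x A) - f A)
    (hempty : f ∅ = 0)
    (k : ℕ) (hk : 0 < k)
    (G : ℕ → Finset E) (x : ℕ → E)
    (hG0 : G 0 = ∅)
    (hGsucc : ∀ t, G (t + 1) = insert (x t) (G t))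
    (hgreedy : ∀ t, ∀ y : E, f (insert y (G t)) - f (G t) ≤
      f (insert (x t) (G t)) - f (G t))
    (OPT : Finset E) (hOPT : OPT.card ≤ k) :
    (1 - (1 - 1 / (k : ℝ)) ^ k) * f OPT ≤ f (G k) ∧
    (1 - 1 / Real.exp 1) * f OPT ≤ f (G k) := by
  have hkR : (0 : ℝ) < k := by exact_mod_cast hk
  have hkne : (k : ℝ) ≠ 0 := ne_of_gt hkR
  have hq0 : (0 : ℝ) ≤ 1 - 1 / (k : ℝ) := by
    have : 1 / (k : ℝ) ≤ 1 := by
      rw [div_le_one hkR]; exact_mod_cast hk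
    linarith
  -- key per-step inequality
  have key : ∀ t, f OPT - f (G t) ≤ (k : ℝ) * (f (G (t + 1)) - f (G t)) := by
    intro t
    have h1 : f OPT ≤ f (G t ∪ OPT) := hmono _ _ Finset.subset_union_right
    have h2 := submodular_sum_gain f hsub OPT (G t)
    have h3 : ∑ y ∈ OPT, (f (insert y (G t)) - f (G t)) ≤
        ∑ _y ∈ OPT, (f (insert (x t) (G t)) - f (G t)) :=
      Finset.sum_le_sum fun y _ => hgreedy t y
    rw [Finset.sum_const, nsmul_eq_mul] at h3
    have hgain : 0 ≤ f (insert (x t) (G t)) - f (G t) := by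
      have := hmono (G t) (insert (x t) (G t)) (Finset.subset_insert _ _)
      linarith
    have h4 : (OPT.card : ℝ) * (f (insert (x t) (G t)) - f (G t)) ≤
        (k : ℝ) * (f (insert (x t) (G t)) - f (G t)) := by
      apply mul_le_mul_of_nonneg_right _ hgain
      exact_mod_cast hOPT
    rw [hGsucc t]
    linarith
  -- induction
  have main : ∀ t, f OPT - f (G t) ≤ (1 - 1 / (k : ℝ)) ^ t * f OPT := by
    intro t
    induction t with
    | zero => simp [hG0, hempty]
    | succ t ih =>
      have hkey := key t
      have hstep : f OPT - f (G (t + 1)) ≤ (1 - 1 / (k : ℝ)) * (f OPT - f (G t)) := by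
        have h5 : (f OPT - f (G t)) / (k : ℝ) ≤ f (G (t + 1)) - f (G t) := by
          rw [div_le_iff₀ hkR]; linarith
        have : (1 - 1 / (k : ℝ)) * (f OPT - f (G t)) =
            (f OPT - f (G t)) - (f OPT - f (G t)) / (k : ℝ) := by
          field_simp
        rw [this]; linarith
      calc f OPT - f (G (t + 1)) ≤ (1 - 1 / (k : ℝ)) * (f OPT - f (G t)) := hstep
        _ ≤ (1 - 1 / (k : ℝ)) * ((1 - 1 / (k : ℝ)) ^ t * f OPT) :=
            mul_le_mul_of_nonneg_left ih hq0
        _ = (1 - 1 / (k : ℝ)) ^ (t + 1) * f OPT := by ring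
  have h1 : (1 - (1 - 1 / (k : ℝ)) ^ k) * f OPT ≤ f (G k) := by
    have := main k
    nlinarith [hnn (G k)]
  refine ⟨h1, ?_⟩
  have hpow : (1 - 1 / (k : ℝ)) ^ k ≤ 1 / Real.exp 1 := by
    have hle : 1 - 1 / (k : ℝ) ≤ Real.exp (-(1 / (k : ℝ))) := by
      have := Real.add_one_le_exp (-(1 / (k : ℝ)))
      linarith
    have := pow_le_pow_left₀ hq0 hle k
    rw [← Real.exp_nat_mul] at this
    have hx : (k : ℝ) * (-(1 / (k : ℝ))) = -1 := by field_simp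
    rw [hx] at this
    rwa [Real.exp_neg, ← one_div] at this
  have : (1 - 1 / Real.exp 1) * f OPT ≤ (1 - (1 - 1 / (k : ℝ)) ^ k) * f OPT := by
    apply mul_le_mul_of_nonneg_right _ (hnn OPT)
    linarith
  linarith
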